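/- Let F be a finite set of positive real numbers, C > 0 and 0 < α < 1. Then there is no strictly increasing sequence (ω_p)_{p≥1} of real numbers such that for every p ≥ 1: (i) ω_p ≤ C·p^α, and (ii) ω_p = m·a for some positive integer m and some a ∈ F. -/

import Mathlib

theorem stmt_0 (F : Finset ℝ) (hF : ∀ a ∈ F, 0 < a) (C α : ℝ)
    (hC : 0 < C) (hα0 : 0 < α) (hα1 : α < 1) :
    ¬ ∃ ω : ℕ → ℝ,
      (∀ p : ℕ, 1 ≤ p → ω p < ω (p + 1)) ∧
      (∀ p : ℕ, 1 ≤ p →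
        ω p ≤ C * (p : ℝ) ^ α ∧ ∃ m : ℕ, 0 < m ∧ ∃ a ∈ F, ω p = m * a) := by
  rintro ⟨ω, hmono, hbound⟩
  -- F is nonempty
  obtain ⟨-, m1, -, a1, ha1F, -⟩ := hbound 1 le_rfl
  have hne : F.Nonempty := ⟨a1, ha1F⟩
  set a₀ := F.min' hne with ha₀def
  have ha₀ : 0 < a₀ := hF _ (F.min'_mem hne)
  -- choice of witnesses
  have hw : ∀ p : ℕ, ∃ ma : ℕ × ℝ, 1 ≤ p →
      0 < ma.1 ∧ ma.2 ∈ F ∧ ω p = ma.1 * ma.2 := by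
    intro p
    by_cases hp : 1 ≤ p
    · obtain ⟨-, m, hm, a, haF, heq⟩ := hbound p hp
      exact ⟨(m, a), fun _ => ⟨hm, haF, heq⟩⟩
    · exact ⟨(1, a1), fun h => absurd h hp⟩
  choose g hg using hw
  -- strict monotonicity on [1, ∞)
  have hmono' : ∀ p q : ℕ, 1 ≤ p → p < q → ω p < ω q := by
    intro p q hp hpq
    induction q with
    | zero => omega
    | succ n ih =>
      rcases Nat.lt_succ_iff_lt_or_eq.mp hpq with h | h
      · exact (ih h).trans (hmono n (by omega))
      · subst h; exact hmono p hp
  -- the key counting inequality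
  have key : ∀ P : ℕ, 1 ≤ P →
      (P : ℝ) ≤ (F.card : ℝ) * (C * (P : ℝ) ^ α / a₀ + 1) := by
    intro P hP
    have hPpos : (0:ℝ) < (P:ℝ) := by exact_mod_cast hP
    have hrpow_pos : (0:ℝ) ≤ C * (P:ℝ) ^ α :=
      le_of_lt (mul_pos hC (Real.rpow_pos_of_pos hPpos α))
    set M := ⌈C * (P : ℝ) ^ α / a₀⌉₊ with hMdef
    have hcard : (Finset.Icc 1 P).card ≤ ((Finset.Icc 1 M) ×ˢ F).card := by
      apply Finset.card_le_card_of_injOn g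
      · intro p hp
        rw [Finset.mem_coe, Finset.mem_Icc] at hp
        obtain ⟨hm, haF, heq⟩ := hg p hp.1
        have hab : 0 < (g p).2 := hF _ haF
        have hle : ω p ≤ C * (P:ℝ) ^ α := by
          refine le_trans (hbound p hp.1).1 ?_
          have : (p:ℝ) ^ α ≤ (P:ℝ) ^ α := by
            apply Real.rpow_le_rpow (by positivity) (by exact_mod_cast hp.2) hα0.le
          nlinarith
        have h1 : ((g p).1 : ℝ) ≤ C * (P:ℝ) ^ α / (g p).2 := by
          rw [le_div_iff₀ hab]; rw [heq] at hle; exact hle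
        have h2 : C * (P:ℝ) ^ α / (g p).2 ≤ C * (P:ℝ) ^ α / a₀ :=
          div_le_div_of_nonneg_left hrpow_pos ha₀ (F.min'_le _ haF)
        have h3 : ((g p).1 : ℝ) ≤ (M : ℝ) :=
          le_trans (h1.trans h2) (Nat.le_ceil _)
        rw [Finset.mem_coe, Finset.mem_product, Finset.mem_Icc]
        exact ⟨⟨hm, by exact_mod_cast h3⟩, haF⟩
      · intro p hp q hq hpq
        rw [Finset.mem_coe, Finset.mem_Icc] at hp hq
        obtain ⟨-, -, heqp⟩ := hg p hp.1
        obtain ⟨-, -, heqq⟩ := hg q hq.1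
        have : ω p = ω q := by rw [heqp, heqq, hpq]
        rcases lt_trichotomy p q with h | h | h
        · exact absurd this (ne_of_lt (hmono' p q hp.1 h))
        · exact h
        · exact absurd this.symm (ne_of_lt (hmono' q p hq.1 h))
    rw [Finset.card_product, Nat.card_Icc, Nat.card_Icc] at hcard
    simp only [Nat.add_sub_cancel] at hcard
    have hM : (M : ℝ) ≤ C * (P:ℝ) ^ α / a₀ + 1 :=
      le_of_lt (Nat.ceil_lt_add_one (by positivity))
    have hcast : (P : ℝ) ≤ (M : ℝ) * (F.card : ℝ) := by exact_mod_cast hcard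
    have hFc : (0:ℝ) ≤ (F.card : ℝ) := by positivity
    nlinarith
  -- derive contradiction
  set K := (F.card : ℝ) * (C / a₀ + 1) with hKdef
  have key2 : ∀ P : ℕ, 1 ≤ P → (P : ℝ) ≤ K * (P : ℝ) ^ α := by
    intro P hP
    have hP1 : (1:ℝ) ≤ (P:ℝ) := by exact_mod_cast hP
    have hpow1 : (1:ℝ) ≤ (P:ℝ) ^ α := Real.one_le_rpow hP1 hα0.le
    have hFc : (1:ℝ) ≤ (F.card : ℝ) := by
      exact_mod_cast Finset.card_pos.mpr hne
    have := key P hP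
    have hexp : C * (P:ℝ) ^ α / a₀ + 1 ≤ (C / a₀ + 1) * (P:ℝ) ^ α := by
      have hdiv : (0:ℝ) < C / a₀ := div_pos hC ha₀
      have : C * (P:ℝ) ^ α / a₀ = (C / a₀) * (P:ℝ) ^ α := by ring
      rw [this]; nlinarith
    calc (P:ℝ) ≤ (F.card : ℝ) * (C * (P:ℝ) ^ α / a₀ + 1) := this
      _ ≤ (F.card : ℝ) * ((C / a₀ + 1) * (P:ℝ) ^ α) := by nlinarith
      _ = K * (P:ℝ) ^ α := by ring
  have htend : Filter.Tendsto (fun p : ℕ => (p:ℝ) ^ (1 - α)) Filter.atTop Filter.atTop :=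
    (tendsto_rpow_atTop (by linarith)).comp tendsto_natCast_atTop_atTop
  obtain ⟨P, hPK, hP1⟩ :=
    ((htend.eventually_gt_atTop K).and (Filter.eventually_ge_atTop 1)).exists
  have hPpos : (0:ℝ) < (P:ℝ) := by exact_mod_cast hP1
  have hpowpos : (0:ℝ) < (P:ℝ) ^ α := Real.rpow_pos_of_pos hPpos α
  have h1 : (P:ℝ) = (P:ℝ) ^ (1 - α) * (P:ℝ) ^ α := by
    rw [← Real.rpow_add hPpos]; simp
  have h2 := key2 P hP1
  nlinarith
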